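/- Let S ⊆ T ⊆ F_2^n be subspaces, x, z ∈ F_2^n, and x', z' ∈ F_2^n. Define the coset state |S_{x,z}⟩ = (1/√|S|) Σ_{s ∈ S} (-1)^{s·z} |s + x⟩ and |T_{x',z'}⟩ = (1/√|T|) Σ_{t ∈ T} (-1)^{t·z'} |t + x'⟩. Then applying a coordinatewise CNOT from the first register to the second (mapping |a⟩|b⟩ to |a⟩|b + a⟩) to the state |S_{x,z}⟩ ⊗ |T_{x',z'}⟩ yields the state |S_{x, z-z'}⟩ ⊗ |T_{x+x', z'}⟩. -/

import Mathlib

open scoped Classical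

/-- The phase `(-1)^b` for `b ∈ F_2`. -/
noncomputable def chi (b : ZMod 2) : ℂ := if b = 0 then 1 else -1

/-- The `F_2` inner product. -/
def ip {n : ℕ} (a b : Fin n → ZMod 2) : ZMod 2 := ∑ i, a i * b i

/-- The coset state `|S_{x,z}⟩ = (1/√|S|) Σ_{s ∈ S} (-1)^{⟨s,z⟩} |s + x⟩`,
as an amplitude function on `F_2^n`. -/
noncomputable def cosetState {n : ℕ} (S : Submodule (ZMod 2) (Fin n → ZMod 2))
    (x z : Fin n → ZMod 2) : (Fin n → ZMod 2) → ℂ :=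
  fun v => if v - x ∈ S then chi (ip (v - x) z) / Real.sqrt (Nat.card S) else 0

lemma z2 (w : ZMod 2) : w = 0 ∨ w = 1 := by
  fin_cases w
  · exact Or.inl rfl
  · exact Or.inr rfl

lemma chi_add (u v : ZMod 2) : chi (u + v) = chi u * chi v := by
  rcases z2 u with rfl | rfl <;> rcases z2 v with rfl | rfl <;> simp [chi] <;> first | decide | norm_num

lemma chi_sq (u : ZMod 2) : chi u * chi u = 1 := by
  rcases z2 u with rfl | rfl <;> simp [chi]

lemma ip_add_left {n : ℕ} (a b c : Fin n → ZMod 2) :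
    ip (a + b) c = ip a c + ip b c := by
  simp [ip, add_mul, Finset.sum_add_distrib]

lemma ip_add_right {n : ℕ} (a b c : Fin n → ZMod 2) :
    ip a (b + c) = ip a b + ip a c := by
  simp [ip, mul_add, Finset.sum_add_distrib]

lemma chi_sub (u v : ZMod 2) : chi (u - v) = chi u * chi v := by
  rcases z2 u with rfl | rfl <;> rcases z2 v with rfl | rfl <;> simp [chi] <;> first | decide | norm_num

lemma ip_sub_right {n : ℕ} (a b c : Fin n → ZMod 2) :
    ip a (b - c) = ip a b - ip a c := by
  simp [ip, mul_sub, Finset.sum_sub_distrib]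

/-- for subspaces `S ⊆ T ⊆ F_2^n`, applying a coordinatewise CNOT
(`|a⟩|b⟩ ↦ |a⟩|b + a⟩`) to `|S_{x,z}⟩ ⊗ |T_{x',z'}⟩` yields
`|S_{x,z-z'}⟩ ⊗ |T_{x+x',z'}⟩`.  Amplitude-wise: the amplitude of `|a⟩|b⟩` in
the image state is the amplitude of `|a⟩|b - a⟩` in the input state. -/
theorem cnot_cosetState {n : ℕ} (S T : Submodule (ZMod 2) (Fin n → ZMod 2))
    (hST : S ≤ T) (x z x' z' : Fin n → ZMod 2) :
    ∀ a b : Fin n → ZMod 2,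
      cosetState S x z a * cosetState T x' z' (b - a) =
        cosetState S x (z - z') a * cosetState T (x + x') z' b := by
  intro a b
  unfold cosetState
  by_cases hs : a - x ∈ S
  · have ht : a - x ∈ T := hST hs
    have hb : b - (x + x') = (b - a - x') + (a - x) := by ring
    have hmem : (b - a - x' ∈ T) ↔ (b - (x + x') ∈ T) := by
      rw [hb]
      constructor
      · exact fun h => T.add_mem h ht
      · intro h
        have := T.sub_mem h ht
        simpa using this
    by_cases htb : b - a - x' ∈ T
    · have htb' : b - (x + x') ∈ T := hmem.mp htb
      rw [if_pos hs, if_pos htb, if_pos hs, if_pos htb']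
      have key : chi (ip (a - x) (z - z')) * chi (ip (b - (x + x')) z') =
          chi (ip (a - x) z) * chi (ip (b - a - x') z') := by
        rw [hb, ip_add_left, chi_add, ip_sub_right, chi_sub]
        linear_combination chi (ip (a - x) z) * chi (ip (b - a - x') z') *
          chi_sq (ip (a - x) z')
      rw [div_mul_div_comm, div_mul_div_comm, key]
    · have htb' : ¬ (b - (x + x') ∈ T) := fun h => htb (hmem.mpr h)
      rw [if_pos hs, if_neg htb, if_pos hs, if_neg htb']
      ring
  · rw [if_neg hs, if_neg hs]
    ring
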